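/- Consider the Lie algebra L_{9,28}^{p,q} (pq ≠ 0) with nonzero brackets [X_1,X_2]=2X_2, [X_1,X_3]=−2X_3, [X_2,X_3]=X_1, [X_1,X_4]=X_4, [X_1,X_5]=−X_5, [X_2,X_5]=X_4, [X_3,X_4]=X_5, [X_4,X_8]=pX_4, [X_4,X_9]=qX_4, [X_5,X_8]=pX_5, [X_5,X_9]=qX_5, [X_6,X_8]=X_6, [X_7,X_9]=X_7. On the open region where x_6 > 0, x_7 > 0, and J_1 := −x_2 x_5² − x_1 x_4 x_5 + x_3 x_4² > 0, the function I_1 = J_1 / (x_6^{2p} x_7^{2q}) satisfies \hat{X}_i(I_1) = 0 for all i = 1,...,9. -/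

import Mathlib

open Finset

noncomputable def Xhat (C : Fin 9 → Fin 9 → Fin 9 → ℝ) (i : Fin 9)
    (F : (Fin 9 → ℝ) → ℝ) : (Fin 9 → ℝ) → ℝ :=
  fun x => ∑ j : Fin 9, (∑ k : Fin 9, C i j k * x k) * fderiv ℝ F x (Pi.single j 1)

noncomputable def Lhalf (p q : ℝ) : Fin 9 → Fin 9 → Fin 9 → ℝ := fun i j k =>
  if (i, j, k) = ((0 : Fin 9), (1 : Fin 9), (1 : Fin 9)) then (2 : ℝ) else
  if (i, j, k) = ((0 : Fin 9), (2 : Fin 9), (2 : Fin 9)) then (-2 : ℝ) else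
  if (i, j, k) = ((1 : Fin 9), (2 : Fin 9), (0 : Fin 9)) then (1 : ℝ) else
  if (i, j, k) = ((0 : Fin 9), (3 : Fin 9), (3 : Fin 9)) then (1 : ℝ) else
  if (i, j, k) = ((0 : Fin 9), (4 : Fin 9), (4 : Fin 9)) then (-1 : ℝ) else
  if (i, j, k) = ((1 : Fin 9), (4 : Fin 9), (3 : Fin 9)) then (1 : ℝ) else
  if (i, j, k) = ((2 : Fin 9), (3 : Fin 9), (4 : Fin 9)) then (1 : ℝ) else
  if (i, j, k) = ((3 : Fin 9), (7 : Fin 9), (3 : Fin 9)) then (p : ℝ) else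
  if (i, j, k) = ((3 : Fin 9), (8 : Fin 9), (3 : Fin 9)) then (q : ℝ) else
  if (i, j, k) = ((4 : Fin 9), (7 : Fin 9), (4 : Fin 9)) then (p : ℝ) else
  if (i, j, k) = ((4 : Fin 9), (8 : Fin 9), (4 : Fin 9)) then (q : ℝ) else
  if (i, j, k) = ((5 : Fin 9), (7 : Fin 9), (5 : Fin 9)) then (1 : ℝ) else
  if (i, j, k) = ((6 : Fin 9), (8 : Fin 9), (6 : Fin 9)) then (1 : ℝ) else
  0

noncomputable def C (p q : ℝ) (i j k : Fin 9) : ℝ := Lhalf p q i j k - Lhalf p q j i k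

noncomputable def J₁ : (Fin 9 → ℝ) → ℝ :=
  fun x => -(x 1) * (x 4)^2 - x 0 * x 3 * x 4 + x 2 * (x 3)^2

noncomputable def I₁ (p q : ℝ) : (Fin 9 → ℝ) → ℝ :=
  fun x => J₁ x / (Real.rpow (x 5) (2 * p) * Real.rpow (x 6) (2 * q))

private lemma sum9 (f : Fin 9 → ℝ) :
    ∑ j : Fin 9, f j = f 0 + f 1 + f 2 + f 3 + f 4 + f 5 + f 6 + f 7 + f 8 := by
  rw [Fin.sum_univ_succ, Fin.sum_univ_eight]
  simp only [show Fin.succ (0:Fin 8) = (1:Fin 9) from rfl, show Fin.succ (1:Fin 8) = (2:Fin 9) from rfl,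
    show Fin.succ (2:Fin 8) = (3:Fin 9) from rfl, show Fin.succ (3:Fin 8) = (4:Fin 9) from rfl,
    show Fin.succ (4:Fin 8) = (5:Fin 9) from rfl, show Fin.succ (5:Fin 8) = (6:Fin 9) from rfl,
    show Fin.succ (6:Fin 8) = (7:Fin 9) from rfl, show Fin.succ (7:Fin 8) = (8:Fin 9) from rfl]
  ring

private lemma vec9_7 (a b c d e f g h i : ℝ) : ![a,b,c,d,e,f,g,h,i] 7 = h := rfl
private lemma vec9_8 (a b c d e f g h i : ℝ) : ![a,b,c,d,e,f,g,h,i] 8 = i := rfl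
private lemma vec9_5 (a b c d e f g h i : ℝ) : ![a,b,c,d,e,f,g,h,i] 5 = f := rfl
private lemma vec9_6 (a b c d e f g h i : ℝ) : ![a,b,c,d,e,f,g,h,i] 6 = g := rfl
private lemma vec9_4 (a b c d e f g h i : ℝ) : ![a,b,c,d,e,f,g,h,i] 4 = e := rfl
private lemma vec9_3 (a b c d e f g h i : ℝ) : ![a,b,c,d,e,f,g,h,i] 3 = d := rfl
private lemma vec9_2 (a b c d e f g h i : ℝ) : ![a,b,c,d,e,f,g,h,i] 2 = c := rfl
private lemma vec9_1 (a b c d e f g h i : ℝ) : ![a,b,c,d,e,f,g,h,i] 1 = b := rfl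
private lemma vec9_0 (a b c d e f g h i : ℝ) : ![a,b,c,d,e,f,g,h,i] 0 = a := rfl

private lemma dI (p q : ℝ) (x : Fin 9 → ℝ) (h5 : 0 < x 5) (h6 : 0 < x 6) :
    ∀ j : Fin 9, fderiv ℝ (I₁ p q) x (Pi.single j 1) =
      ![ -(x 3 * x 4) / (Real.rpow (x 5) (2*p) * Real.rpow (x 6) (2*q)),
         -(x 4 ^ 2) / (Real.rpow (x 5) (2*p) * Real.rpow (x 6) (2*q)),
         (x 3 ^ 2) / (Real.rpow (x 5) (2*p) * Real.rpow (x 6) (2*q)),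
         (2 * x 2 * x 3 - x 0 * x 4) / (Real.rpow (x 5) (2*p) * Real.rpow (x 6) (2*q)),
         (-(2 * x 1 * x 4) - x 0 * x 3) / (Real.rpow (x 5) (2*p) * Real.rpow (x 6) (2*q)),
         -(J₁ x * (2*p)) / (x 5 * (Real.rpow (x 5) (2*p) * Real.rpow (x 6) (2*q))),
         -(J₁ x * (2*q)) / (x 6 * (Real.rpow (x 5) (2*p) * Real.rpow (x 6) (2*q))),
         0, 0 ] j := by
  have hproj : ∀ j : Fin 9, HasFDerivAt (fun y : Fin 9 → ℝ => y j)
      (ContinuousLinearMap.proj j : (Fin 9 → ℝ) →L[ℝ] ℝ) x :=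
    fun j => hasFDerivAt_apply j x
  have hsq : ∀ j : Fin 9, HasFDerivAt (fun y : Fin 9 → ℝ => (y j)^2)
      (((2:ℕ) * (x j)^1) • (ContinuousLinearMap.proj j : (Fin 9 → ℝ) →L[ℝ] ℝ)) x :=
    fun j => by
      have h := (hasDerivAt_pow 2 (x j)).comp_hasFDerivAt x (hproj j)
      exact h
  have hnum : HasFDerivAt J₁ _ x :=
    (((hproj 1).neg.mul (hsq 4)).sub
      (((hproj 0).mul (hproj 3)).mul (hproj 4))).add ((hproj 2).mul (hsq 3))
  have hg5 : HasFDerivAt (fun y : Fin 9 → ℝ => Real.rpow (y 5) (2*p))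
      ((2*p * (x 5) ^ (2*p-1)) • (ContinuousLinearMap.proj 5 : (Fin 9 → ℝ) →L[ℝ] ℝ)) x :=
    by
      have h := (Real.hasDerivAt_rpow_const (p := 2*p) (Or.inl h5.ne')).comp_hasFDerivAt x (hproj 5)
      exact h
  have hg6 : HasFDerivAt (fun y : Fin 9 → ℝ => Real.rpow (y 6) (2*q))
      ((2*q * (x 6) ^ (2*q-1)) • (ContinuousLinearMap.proj 6 : (Fin 9 → ℝ) →L[ℝ] ℝ)) x :=
    by
      have h := (Real.hasDerivAt_rpow_const (p := 2*q) (Or.inl h6.ne')).comp_hasFDerivAt x (hproj 6)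
      exact h
  have h5p : (0:ℝ) < Real.rpow (x 5) (2 * p) := Real.rpow_pos_of_pos h5 _
  have h6q : (0:ℝ) < Real.rpow (x 6) (2 * q) := Real.rpow_pos_of_pos h6 _
  have hne : Real.rpow (x 5) (2 * p) * Real.rpow (x 6) (2 * q) ≠ 0 :=
    (mul_pos h5p h6q).ne'
  have hI : HasFDerivAt
      (fun y : Fin 9 → ℝ => J₁ y * (Real.rpow (y 5) (2*p) * Real.rpow (y 6) (2*q))⁻¹) _ x :=
    hnum.mul ((hasDerivAt_inv hne).comp_hasFDerivAt x (hg5.mul hg6))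
  have hfun : I₁ p q = fun y : Fin 9 → ℝ =>
      J₁ y * (Real.rpow (y 5) (2*p) * Real.rpow (y 6) (2*q))⁻¹ :=
    funext fun y => div_eq_mul_inv _ _
  have e5 : x 5 ^ (2*p-1) = x 5 ^ (2*p) / x 5 := by
    rw [Real.rpow_sub h5, Real.rpow_one]
  have e6 : x 6 ^ (2*q-1) = x 6 ^ (2*q) / x 6 := by
    rw [Real.rpow_sub h6, Real.rpow_one]
  intro j
  rw [hfun, hI.fderiv]
  fin_cases j
  all_goals simp only [ContinuousLinearMap.add_apply, ContinuousLinearMap.sub_apply,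
      ContinuousLinearMap.smul_apply, ContinuousLinearMap.neg_apply,
      ContinuousLinearMap.proj_apply, Pi.single_apply, smul_eq_mul, e5, e6, J₁,
      Pi.neg_apply, Pi.mul_apply, ← Real.rpow_eq_pow]
  all_goals simp (config := { decide := true }) only [Matrix.cons_val_zero, Matrix.cons_val_one,
      Matrix.head_cons, if_true, if_false, Fin.mk_zero, Fin.mk_one, Fin.reduceFinMk, Matrix.cons_val]
  all_goals try field_simp
  all_goals try ring

set_option maxHeartbeats 2000000 in
theorem invariant_L9_28 (p q : ℝ) (hp : p ≠ 0) (hq : q ≠ 0) :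
    ∀ (i : Fin 9) (x : Fin 9 → ℝ), 0 < x 5 → 0 < x 6 → 0 < J₁ x →
      Xhat (C p q) i (I₁ p q) x = 0 := by
  intro i x h5 h6 hJ
  have h5p : (0:ℝ) < Real.rpow (x 5) (2 * p) := Real.rpow_pos_of_pos h5 _
  have h6q : (0:ℝ) < Real.rpow (x 6) (2 * q) := Real.rpow_pos_of_pos h6 _
  rw [Xhat]
  simp only [dI p q x h5 h6]
  fin_cases i
  all_goals rw [sum9]
  all_goals simp (config := { decide := true }) [sum9, C, Lhalf, J₁, vec9_0, vec9_1, vec9_2, vec9_3, vec9_4, vec9_5, vec9_6, vec9_7, vec9_8]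
  all_goals try field_simp
  all_goals try ring
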